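/- Let Y be a Banach space, 1 < p < ∞ and α ∈ (0,1] with αp < 1. Then there exists a constant C > 0, depending only on p and α, such that for every n ∈ ℕ and every x ∈ L^p([0,1];Y) with ‖x‖_{W^α_p([0,1];Y)} < ∞ one has ‖𝔥ⁿ_s(x) − x‖_{L^p([0,1];Y)} ≤ C · 2^{−nα} · ‖x‖_{W^α_p([0,1];Y)}. -/

import Mathlib

open MeasureTheory Set Filter
open scoped ENNReal NNReal

/-- The shifted Haar projection `𝔥ⁿ_s`: the step function which vanishes on `[0, 2⁻ⁿ]` and,
for each `j = 1, …, 2ⁿ - 1`, equals on `(j·2⁻ⁿ, (j+1)·2⁻ⁿ]` the mean value of `x` over the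
preceding dyadic interval `((j-1)·2⁻ⁿ, j·2⁻ⁿ]`. -/
noncomputable def shiftedHaar {Y : Type*} [NormedAddCommGroup Y] [NormedSpace ℝ Y]
    (n : ℕ) (x : ℝ → Y) : ℝ → Y := fun t =>
  ∑ j ∈ Finset.Ico 1 (2 ^ n : ℕ),
    Set.indicator (Set.Ioc ((j : ℝ) / 2 ^ n) (((j : ℝ) + 1) / 2 ^ n))
      (fun _ => (2 ^ n : ℝ) • ∫ r in Set.Ioc (((j : ℝ) - 1) / 2 ^ n) ((j : ℝ) / 2 ^ n), x r) t

/-- The `p`-th power of the Gagliardo (fractional Sobolev) seminorm of order `α` on `[0,1]`: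
`[x]_{W^α_p}^p = ∫₀¹∫₀¹ ‖x t - x s‖^p / |t-s|^{1+αp} ds dt`. -/
noncomputable def gagliardoP {Y : Type*} [NormedAddCommGroup Y]
    (p α : ℝ) (x : ℝ → Y) : ℝ≥0∞ :=
  ∫⁻ t in Set.Ioc (0 : ℝ) 1, ∫⁻ s in Set.Ioc (0 : ℝ) 1,
    ENNReal.ofReal (‖x t - x s‖ ^ p / |t - s| ^ (1 + α * p))

/-- The fractional Sobolev norm `‖x‖_{W^α_p([0,1];Y)} = (‖x‖_{L^p}^p + [x]_{W^α_p}^p)^{1/p}`. -/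
noncomputable def sobolevNorm {Y : Type*} [NormedAddCommGroup Y]
    (p α : ℝ) (x : ℝ → Y) : ℝ≥0∞ :=
  (eLpNorm x (ENNReal.ofReal p) (volume.restrict (Set.Ioc (0 : ℝ) 1)) ^ p
    + gagliardoP p α x) ^ (1 / p)


-- L1: (a+b)^p ≤ 2^p (a^p + b^p)
lemma l1 {a b : ℝ≥0∞} {p : ℝ} (hp : 0 ≤ p) :
    (a + b) ^ p ≤ 2 ^ p * (a ^ p + b ^ p) := by
  calc (a + b) ^ p ≤ (2 * max a b) ^ p := by
        apply ENNReal.rpow_le_rpow _ hp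
        rw [two_mul]
        exact add_le_add (le_max_left _ _) (le_max_right _ _)
    _ = 2 ^ p * (max a b) ^ p := ENNReal.mul_rpow_of_nonneg _ _ hp
    _ ≤ 2 ^ p * (a ^ p + b ^ p) := by
        gcongr
        rcases max_cases a b with ⟨h, _⟩ | ⟨h, _⟩ <;> rw [h]
        · exact le_add_right le_rfl
        · exact le_add_left le_rfl

-- L2: Hölder / Jensen
lemma l2 {Y : Type*} [NormedAddCommGroup Y] [NormedSpace ℝ Y]
    {μ : Measure ℝ} {f : ℝ → Y} (hf : AEStronglyMeasurable f μ) {p q : ℝ} (hpq : p.HolderConjugate q) :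
    (‖∫ r, f r ∂μ‖₊ : ℝ≥0∞) ^ p ≤ (μ Set.univ) ^ (p - 1) * ∫⁻ r, (‖f r‖₊ : ℝ≥0∞) ^ p ∂μ := by
  have h1 : (‖∫ r, f r ∂μ‖₊ : ℝ≥0∞) ≤ ∫⁻ r, (‖f r‖₊ : ℝ≥0∞) ∂μ :=
    enorm_integral_le_lintegral_enorm f
  have h2 : ∫⁻ r, (‖f r‖₊ : ℝ≥0∞) ∂μ
      ≤ (∫⁻ r, (‖f r‖₊ : ℝ≥0∞) ^ p ∂μ) ^ (1/p) * (∫⁻ _r, (1:ℝ≥0∞) ^ q ∂μ) ^ (1/q) := by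
    have := ENNReal.lintegral_mul_le_Lp_mul_Lq μ hpq
      (f := fun r => (‖f r‖₊ : ℝ≥0∞)) (g := fun _ => 1) hf.enorm aemeasurable_const
    simpa using this
  have h3 : (∫⁻ _r, (1:ℝ≥0∞) ^ q ∂μ) ^ (1/q) = (μ Set.univ) ^ (1/q) := by
    simp [ENNReal.one_rpow, lintegral_const]
  rw [h3] at h2
  calc (‖∫ r, f r ∂μ‖₊ : ℝ≥0∞) ^ p
      ≤ ((∫⁻ r, (‖f r‖₊ : ℝ≥0∞) ^ p ∂μ) ^ (1/p) * (μ Set.univ) ^ (1/q)) ^ p :=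
        ENNReal.rpow_le_rpow (h1.trans h2) hpq.nonneg
    _ = (μ Set.univ) ^ (p - 1) * ∫⁻ r, (‖f r‖₊ : ℝ≥0∞) ^ p ∂μ := by
        rw [ENNReal.mul_rpow_of_nonneg _ _ hpq.nonneg, ← ENNReal.rpow_mul, ← ENNReal.rpow_mul,
          one_div_mul_cancel hpq.pos.ne', ENNReal.rpow_one, mul_comm]
        have hexp : p / q = p - 1 := by
          rw [hpq.conjugate_eq]
          rw [div_div_eq_mul_div, mul_comm, mul_div_assoc, div_self hpq.pos.ne', mul_one]
        rw [div_mul_eq_mul_div, one_mul, hexp]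

-- L3: mean minus value bound
lemma l3 {Y : Type*} [NormedAddCommGroup Y] [NormedSpace ℝ Y] [CompleteSpace Y]
    {p q : ℝ} (hpq : p.HolderConjugate q) {a b : ℝ} (hab : a < b) {x : ℝ → Y}
    (hx : Integrable x (volume.restrict (Ioc a b))) (y : Y) :
    (‖(b - a)⁻¹ • (∫ r in Ioc a b, x r) - y‖₊ : ℝ≥0∞) ^ p
      ≤ (ENNReal.ofReal (b - a))⁻¹ * ∫⁻ r in Ioc a b, (‖x r - y‖₊ : ℝ≥0∞) ^ p := by
  have hba : (0:ℝ) < b - a := sub_pos.2 hab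
  have hvol : volume (Ioc a b) = ENNReal.ofReal (b - a) := Real.volume_Ioc
  set z : ℝ≥0∞ := ENNReal.ofReal (b - a) with hz
  have hz0 : z ≠ 0 := by simp [hz, ENNReal.ofReal_eq_zero, not_le, hba, hab]
  have hztop : z ≠ ⊤ := ENNReal.ofReal_ne_top
  have key : (b - a)⁻¹ • (∫ r in Ioc a b, x r) - y
      = (b - a)⁻¹ • ∫ r in Ioc a b, (x r - y) := by
    rw [integral_sub hx (integrable_const y), smul_sub, integral_const,
      measureReal_restrict_apply_univ, measureReal_def, hvol, ENNReal.toReal_ofReal hba.le, smul_smul,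
      inv_mul_cancel₀ hba.ne', one_smul]
  have hnn : (‖(b-a)⁻¹‖₊ : ℝ≥0∞) = z⁻¹ := by
    rw [← enorm_eq_nnnorm, ← ofReal_norm, Real.norm_eq_abs, abs_of_nonneg (inv_nonneg.2 hba.le),
      ENNReal.ofReal_inv_of_pos hba, hz]
  calc (‖(b - a)⁻¹ • (∫ r in Ioc a b, x r) - y‖₊ : ℝ≥0∞) ^ p
      = (z⁻¹) ^ p * (‖∫ r in Ioc a b, (x r - y)‖₊ : ℝ≥0∞) ^ p := by
        rw [key, nnnorm_smul, ENNReal.coe_mul, ENNReal.mul_rpow_of_nonneg _ _ hpq.nonneg, hnn]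
    _ ≤ (z⁻¹) ^ p * (z ^ (p - 1) * ∫⁻ r in Ioc a b, (‖x r - y‖₊ : ℝ≥0∞) ^ p) := by
        gcongr
        have := l2 (μ := volume.restrict (Ioc a b)) (f := fun r => x r - y)
          ((hx.sub (integrable_const y)).aestronglyMeasurable) hpq
        simpa [Measure.restrict_apply_univ, hvol] using this
    _ = z⁻¹ * ∫⁻ r in Ioc a b, (‖x r - y‖₊ : ℝ≥0∞) ^ p := by
        rw [← mul_assoc]
        congr 1
        rw [ENNReal.inv_rpow, ← ENNReal.rpow_neg, ← ENNReal.rpow_add _ _ hz0 hztop,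
          ← ENNReal.rpow_neg_one z]
        congr 1
        ring

-- L4: pointwise domination by the Gagliardo integrand
lemma l4 {Y : Type*} [NormedAddCommGroup Y] {p β : ℝ} (hp : 0 < p) (hβ : 0 < β)
    (w : Y) {d c : ℝ} (hd : 0 < d) (hdc : d ≤ c) :
    (‖w‖₊ : ℝ≥0∞) ^ p ≤ ENNReal.ofReal (c ^ β) * ENNReal.ofReal (‖w‖ ^ p / d ^ β) := by
  have h1 : (‖w‖₊ : ℝ≥0∞) ^ p = ENNReal.ofReal (‖w‖ ^ p) := by
    rw [← enorm_eq_nnnorm, ← ofReal_norm, ← ENNReal.ofReal_rpow_of_nonneg (norm_nonneg w) hp.le]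
  rw [h1, ← ENNReal.ofReal_mul (Real.rpow_nonneg (hd.trans_le hdc).le _)]
  apply ENNReal.ofReal_le_ofReal
  have hdβ : (0:ℝ) < d ^ β := Real.rpow_pos_of_pos hd β
  calc ‖w‖ ^ p = d ^ β * (‖w‖ ^ p / d ^ β) := by field_simp
    _ ≤ c ^ β * (‖w‖ ^ p / d ^ β) := by
        apply mul_le_mul_of_nonneg_right (Real.rpow_le_rpow hd.le hdc hβ.le)
        positivity

-- L5: cover
lemma l5 (n : ℕ) : Ioc (0:ℝ) 1 ⊆ ⋃ j ∈ Finset.range (2^n),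
    Ioc ((j:ℝ)/2^n) (((j:ℝ)+1)/2^n) := by
  intro t ht
  have hT : (0:ℝ) < 2^n := by positivity
  set y : ℝ := t * 2^n with hy
  have hy0 : 0 < y := mul_pos ht.1 hT
  set k : ℕ := ⌈y⌉₊ with hk
  have hk1 : 1 ≤ k := Nat.one_le_iff_ne_zero.2 (by simp [hk, Nat.ceil_eq_zero, not_le, hy0])
  have hk2 : k ≤ 2^n := by
    rw [hk]
    apply Nat.ceil_le.2
    push_cast
    calc y = t * 2^n := rfl
      _ ≤ 1 * 2^n := by gcongr; exact ht.2
      _ = 2^n := one_mul _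
  simp only [Set.mem_iUnion, Finset.mem_range]
  refine ⟨k - 1, ?_, ?_, ?_⟩
  · omega
  · have hcast : ((k - 1 : ℕ) : ℝ) = (k : ℝ) - 1 := by
      push_cast [Nat.cast_sub hk1]; ring
    rw [hcast, div_lt_iff₀ hT]
    have := Nat.ceil_lt_add_one hy0.le
    rw [← hk] at this
    linarith [this]
  · have hcast : ((k - 1 : ℕ) : ℝ) + 1 = (k : ℝ) := by
      push_cast [Nat.cast_sub hk1]; ring
    rw [hcast, le_div_iff₀ hT]
    exact Nat.le_ceil y

-- L6: pairwise disjoint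
lemma l6 (n : ℕ) : Set.PairwiseDisjoint ↑(Finset.range (2^n))
    (fun j : ℕ => Ioc ((j:ℝ)/2^n) (((j:ℝ)+1)/2^n)) := by
  have hT : (0:ℝ) < 2^n := by positivity
  have key : ∀ {i j : ℕ}, i < j → ((i:ℝ)+1)/2^n ≤ (j:ℝ)/2^n := by
    intro i j h
    have : ((i:ℝ)) + 1 ≤ (j:ℝ) := by exact_mod_cast h
    gcongr
  intro i _ j _ hij
  rcases hij.lt_or_gt with h | h
  · exact Set.Ioc_disjoint_Ioc.2 ((min_le_left _ _).trans ((key h).trans (le_max_right _ _)))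
  · exact Set.Ioc_disjoint_Ioc.2 ((min_le_right _ _).trans ((key h).trans (le_max_left _ _)))

lemma haar_zero {Y : Type*} [NormedAddCommGroup Y] [NormedSpace ℝ Y]
    (n : ℕ) (x : ℝ → Y) {t : ℝ} (ht : t ≤ 1 / 2^n) : shiftedHaar n x t = 0 := by
  have hT : (0:ℝ) < 2^n := by positivity
  apply Finset.sum_eq_zero
  intro j hj
  rw [Finset.mem_Ico] at hj
  apply Set.indicator_of_notMem
  intro hmem
  have h1 : (1:ℝ) ≤ (j:ℝ) := by exact_mod_cast hj.1
  have : t > (j:ℝ)/2^n := hmem.1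
  have : (1:ℝ)/2^n ≤ (j:ℝ)/2^n := by gcongr
  linarith

lemma haar_eq {Y : Type*} [NormedAddCommGroup Y] [NormedSpace ℝ Y]
    (n : ℕ) (x : ℝ → Y) {j : ℕ} (hj : j ∈ Finset.Ico 1 (2^n)) {t : ℝ}
    (ht : t ∈ Ioc ((j:ℝ)/2^n) (((j:ℝ)+1)/2^n)) :
    shiftedHaar n x t = (2^n : ℝ) • ∫ r in Ioc (((j:ℝ)-1)/2^n) ((j:ℝ)/2^n), x r := by
  have hT : (0:ℝ) < 2^n := by positivity
  rw [shiftedHaar, Finset.sum_eq_single_of_mem j hj, Set.indicator_of_mem ht]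
  intro k hk hkj
  apply Set.indicator_of_notMem
  intro hmem
  rcases hkj.lt_or_gt with h | h
  · have hc : ((k:ℝ)) + 1 ≤ (j:ℝ) := by exact_mod_cast h
    have h1 : ((k:ℝ)+1)/2^n ≤ (j:ℝ)/2^n := by gcongr
    have := hmem.2
    have := ht.1
    linarith
  · have hc : ((j:ℝ)) + 1 ≤ (k:ℝ) := by exact_mod_cast h
    have h1 : ((j:ℝ)+1)/2^n ≤ (k:ℝ)/2^n := by gcongr
    have := hmem.1
    have := ht.2
    linarith

lemma int_sub {Y : Type*} [NormedAddCommGroup Y] {x : ℝ → Y} {p : ℝ} (hp : 1 < p)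
    (hx : MemLp x (ENNReal.ofReal p) (volume.restrict (Ioc (0:ℝ) 1)))
    {a b : ℝ} (h : Ioc a b ⊆ Ioc (0:ℝ) 1) : Integrable x (volume.restrict (Ioc a b)) := by
  haveI : IsFiniteMeasure (volume.restrict (Ioc a b)) :=
    ⟨by rw [Measure.restrict_apply_univ]; exact measure_Ioc_lt_top⟩
  exact (hx.mono_measure (Measure.restrict_mono h le_rfl)).integrable
    (ENNReal.one_le_ofReal.2 hp.le)

-- the oscillation lemma
lemma osc {Y : Type*} [NormedAddCommGroup Y] [NormedSpace ℝ Y] [CompleteSpace Y]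
    {x : ℝ → Y} {p q α : ℝ} (hpq : p.HolderConjugate q) (hβ : 0 < 1 + α * p)
    (hx : MemLp x (ENNReal.ofReal p) (volume.restrict (Ioc (0:ℝ) 1)))
    {a b c t : ℝ} (hab : a < b) (hsub : Ioc a b ⊆ Ioc (0:ℝ) 1)
    (hc : ∀ s ∈ Ioc a b, |t - s| ≤ c) (hc0 : 0 < c) :
    (‖(b-a)⁻¹ • (∫ r in Ioc a b, x r) - x t‖₊ : ℝ≥0∞) ^ p
      ≤ (ENNReal.ofReal (b-a))⁻¹ * ENNReal.ofReal (c ^ (1+α*p)) *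
        ∫⁻ s in Ioc (0:ℝ) 1, ENNReal.ofReal (‖x t - x s‖ ^ p / |t - s| ^ (1+α*p)) := by
  have hint : Integrable x (volume.restrict (Ioc a b)) := int_sub hpq.lt hx hsub
  refine (l3 hpq hab hint (x t)).trans ?_
  rw [mul_assoc]
  gcongr
  have hae : ∀ᵐ s ∂(volume.restrict (Ioc a b)), s ≠ t := by
    apply ae_restrict_of_ae
    rw [ae_iff]
    have : {s : ℝ | ¬ s ≠ t} ⊆ {t} := by intro s hs; simp at hs; simp [hs]
    exact measure_mono_null this (measure_singleton t)
  calc ∫⁻ s in Ioc a b, (‖x s - x t‖₊ : ℝ≥0∞) ^ p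
      ≤ ∫⁻ s in Ioc a b,
          ENNReal.ofReal (c ^ (1+α*p)) * ENNReal.ofReal (‖x t - x s‖ ^ p / |t - s| ^ (1+α*p)) := by
        apply lintegral_mono_ae
        filter_upwards [hae, ae_restrict_mem measurableSet_Ioc] with s hst hs
        rw [show x s - x t = -(x t - x s) by abel, nnnorm_neg]
        exact l4 hpq.pos hβ (x t - x s) (abs_pos.2 (sub_ne_zero.2 (Ne.symm hst))) (hc s hs)
    _ = ENNReal.ofReal (c ^ (1+α*p)) *
          ∫⁻ s in Ioc a b, ENNReal.ofReal (‖x t - x s‖ ^ p / |t - s| ^ (1+α*p)) :=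
        lintegral_const_mul' _ _ ENNReal.ofReal_ne_top
    _ ≤ ENNReal.ofReal (c ^ (1+α*p)) *
          ∫⁻ s in Ioc (0:ℝ) 1, ENNReal.ofReal (‖x t - x s‖ ^ p / |t - s| ^ (1+α*p)) := by
        gcongr

section Tail
variable {Y : Type*} [NormedAddCommGroup Y] [NormedSpace ℝ Y] [CompleteSpace Y]
  {x : ℝ → Y} {p q α : ℝ}

lemma osc_k (hpq : p.HolderConjugate q) (hα0 : 0 < α)
    (hx : MemLp x (ENNReal.ofReal p) (volume.restrict (Ioc (0:ℝ) 1)))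
    (k : ℕ) {t : ℝ} (ht : t ∈ Ioc (0:ℝ) ((1:ℝ)/2^k)) :
    (‖(((1:ℝ)/2^k - 0)⁻¹ • ∫ r in Ioc (0:ℝ) ((1:ℝ)/2^k), x r) - x t‖₊ : ℝ≥0∞) ^ p
      ≤ ENNReal.ofReal (((1:ℝ)/2^k) ^ (α*p)) *
        ∫⁻ s in Ioc (0:ℝ) 1, ENNReal.ofReal (‖x t - x s‖ ^ p / |t - s| ^ (1+α*p)) := by
  have hβ : 0 < 1 + α * p := by nlinarith [hpq.pos, hα0]
  have hδ : (0:ℝ) < (1:ℝ)/2^k := by positivity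
  have hδ1 : (1:ℝ)/2^k ≤ 1 := by
    rw [div_le_one (by positivity)]
    exact one_le_pow₀ one_le_two
  have hsub : Ioc (0:ℝ) ((1:ℝ)/2^k) ⊆ Ioc (0:ℝ) 1 := Ioc_subset_Ioc le_rfl hδ1
  have hc : ∀ s ∈ Ioc (0:ℝ) ((1:ℝ)/2^k), |t - s| ≤ (1:ℝ)/2^k := by
    intro s hs
    rw [abs_le]
    constructor <;> [linarith [ht.1, hs.2]; linarith [ht.2, hs.1]]
  have h := osc hpq hβ hx hδ hsub hc hδ
  refine h.trans (le_of_eq ?_)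
  congr 1
  rw [sub_zero, ← ENNReal.ofReal_inv_of_pos hδ, ← ENNReal.ofReal_mul (by positivity)]
  congr 1
  rw [Real.rpow_add hδ, Real.rpow_one]
  field_simp

lemma Jsub (k : ℕ) : Ioc (0:ℝ) ((1:ℝ)/2^k) ⊆ Ioc (0:ℝ) 1 := by
  apply Ioc_subset_Ioc le_rfl
  rw [div_le_one (by positivity)]
  exact one_le_pow₀ one_le_two

lemma inc (hpq : p.HolderConjugate q) (hα0 : 0 < α)
    (hx : MemLp x (ENNReal.ofReal p) (volume.restrict (Ioc (0:ℝ) 1))) (k : ℕ) :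
    (‖(((1:ℝ)/2^(k+1) - 0)⁻¹ • ∫ r in Ioc (0:ℝ) ((1:ℝ)/2^(k+1)), x r)
        - (((1:ℝ)/2^k - 0)⁻¹ • ∫ r in Ioc (0:ℝ) ((1:ℝ)/2^k), x r)‖₊ : ℝ≥0∞) ^ p
      ≤ ENNReal.ofReal (2 * (2:ℝ) ^ ((k:ℝ) * (1 - α*p))) * gagliardoP p α x := by
  have hδ' : (0:ℝ) < (1:ℝ)/2^(k+1) := by positivity
  have hδ : (0:ℝ) < (1:ℝ)/2^k := by positivity
  have hint : Integrable x (volume.restrict (Ioc (0:ℝ) ((1:ℝ)/2^(k+1)))) :=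
    int_sub hpq.lt hx (Jsub (k+1))
  set mk := (((1:ℝ)/2^k - 0)⁻¹ • ∫ r in Ioc (0:ℝ) ((1:ℝ)/2^k), x r) with hmk
  have h1 := l3 hpq hδ' hint mk
  refine h1.trans ?_
  have hmono : Ioc (0:ℝ) ((1:ℝ)/2^(k+1)) ⊆ Ioc (0:ℝ) ((1:ℝ)/2^k) := by
    apply Ioc_subset_Ioc le_rfl
    gcongr
    · norm_num
    · omega
  have h2 : ∫⁻ r in Ioc (0:ℝ) ((1:ℝ)/2^(k+1)), (‖x r - mk‖₊ : ℝ≥0∞) ^ p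
      ≤ ENNReal.ofReal (((1:ℝ)/2^k) ^ (α*p)) * gagliardoP p α x := by
    calc ∫⁻ r in Ioc (0:ℝ) ((1:ℝ)/2^(k+1)), (‖x r - mk‖₊ : ℝ≥0∞) ^ p
        ≤ ∫⁻ r in Ioc (0:ℝ) ((1:ℝ)/2^(k+1)), ENNReal.ofReal (((1:ℝ)/2^k) ^ (α*p)) *
            ∫⁻ s in Ioc (0:ℝ) 1, ENNReal.ofReal (‖x r - x s‖ ^ p / |r - s| ^ (1+α*p)) := by
          apply lintegral_mono_ae
          filter_upwards [ae_restrict_mem measurableSet_Ioc] with r hr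
          have : x r - mk = -(mk - x r) := by abel
          rw [this, nnnorm_neg]
          exact osc_k hpq hα0 hx k (hmono hr)
      _ = ENNReal.ofReal (((1:ℝ)/2^k) ^ (α*p)) *
            ∫⁻ r in Ioc (0:ℝ) ((1:ℝ)/2^(k+1)),
              ∫⁻ s in Ioc (0:ℝ) 1, ENNReal.ofReal (‖x r - x s‖ ^ p / |r - s| ^ (1+α*p)) :=
          lintegral_const_mul' _ _ ENNReal.ofReal_ne_top
      _ ≤ ENNReal.ofReal (((1:ℝ)/2^k) ^ (α*p)) * gagliardoP p α x := by
          gcongr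
          exact lintegral_mono' (Measure.restrict_mono (Jsub (k+1)) le_rfl) le_rfl
  calc (ENNReal.ofReal ((1:ℝ)/2^(k+1) - 0))⁻¹ *
        ∫⁻ r in Ioc (0:ℝ) ((1:ℝ)/2^(k+1)), (‖x r - mk‖₊ : ℝ≥0∞) ^ p
      ≤ (ENNReal.ofReal ((1:ℝ)/2^(k+1) - 0))⁻¹ *
          (ENNReal.ofReal (((1:ℝ)/2^k) ^ (α*p)) * gagliardoP p α x) := by gcongr
    _ = ENNReal.ofReal (2 * (2:ℝ) ^ ((k:ℝ) * (1 - α*p))) * gagliardoP p α x := by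
        rw [← mul_assoc]
        congr 1
        rw [sub_zero, ← ENNReal.ofReal_inv_of_pos hδ', ← ENNReal.ofReal_mul (by positivity)]
        congr 1
        have e0 : ((1:ℝ)/2^(k+1))⁻¹ = (2:ℝ) ^ (((k:ℝ)) + 1) := by
          rw [one_div, inv_inv, ← Real.rpow_natCast 2 (k+1)]
          push_cast
          ring_nf
        have e1 : ((1:ℝ)/2^k) = (2:ℝ) ^ (-(k:ℝ)) := by
          rw [one_div, ← Real.rpow_natCast 2 k, ← Real.rpow_neg (by norm_num)]
        rw [e0, e1]
        rw [← Real.rpow_mul (by norm_num : (0:ℝ) ≤ 2)]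
        rw [← Real.rpow_add (by norm_num : (0:ℝ) < 2)]
        rw [show ((k:ℝ) + 1) + -(k:ℝ) * (α*p) = 1 + (k:ℝ) * (1 - α*p) by ring]
        rw [Real.rpow_add (by norm_num : (0:ℝ) < 2), Real.rpow_one]

lemma mnorm_le (hp : 0 < p) {v : Y} {B : ℝ≥0∞} (h : (‖v‖₊ : ℝ≥0∞) ^ p ≤ B) :
    (‖v‖₊ : ℝ≥0∞) ≤ B ^ (1/p) := by
  have := ENNReal.rpow_le_rpow h (by positivity : (0:ℝ) ≤ 1/p)
  rwa [← ENNReal.rpow_mul, mul_one_div_cancel hp.ne', ENNReal.rpow_one] at this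

lemma tail (hpq : p.HolderConjugate q) (hα0 : 0 < α) (hαp : α*p < 1)
    (hx : MemLp x (ENNReal.ofReal p) (volume.restrict (Ioc (0:ℝ) 1))) (n : ℕ) :
    ∫⁻ t in Ioc (0:ℝ) ((1:ℝ)/2^n), (‖x t‖₊ : ℝ≥0∞) ^ p
      ≤ ENNReal.ofReal
          (2 * ((2:ℝ)^p + 4^p * (1 + ((2:ℝ)^(1/p)/((2:ℝ)^((1-α*p)/p) - 1))^p)) * ((1:ℝ)/2^n)^(α*p))
        * ((∫⁻ r in Ioc (0:ℝ) 1, (‖x r‖₊ : ℝ≥0∞) ^ p) + gagliardoP p α x) := by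
  have hp := hpq.pos
  have hβ : 0 < 1 + α * p := by nlinarith
  have hθ : 0 < (1 - α*p)/p := div_pos (by linarith) hp
  set r : ℝ := (2:ℝ)^((1-α*p)/p) with hr
  have hr1 : 1 < r := Real.one_lt_rpow_iff_of_pos (by norm_num) |>.2 (Or.inl ⟨by norm_num, hθ⟩)
  set A : ℝ := (2:ℝ)^(1/p)/(r - 1) with hA
  have hApos : 0 < A := by
    apply div_pos (Real.rpow_pos_of_pos (by norm_num) _)
    linarith
  set δ : ℝ := (1:ℝ)/2^n with hδdef
  have hδ : 0 < δ := by positivity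
  have hδ1 : δ ≤ 1 := by
    rw [hδdef, div_le_one (by positivity)]
    exact one_le_pow₀ one_le_two
  set G := gagliardoP p α x with hG
  set L := ∫⁻ r in Ioc (0:ℝ) 1, (‖x r‖₊ : ℝ≥0∞) ^ p with hL
  set m : ℕ → Y := fun k => ((1:ℝ)/2^k - 0)⁻¹ • ∫ r in Ioc (0:ℝ) ((1:ℝ)/2^k), x r with hm
  -- m 0 bound
  have hone : (1:ℝ)/2^0 = 1 := by norm_num
  have hm0 : (‖m 0‖₊ : ℝ≥0∞) ^ p ≤ L := by
    have h := l3 hpq (by norm_num : (0:ℝ) < (1:ℝ)/2^0) (int_sub hpq.lt hx (Jsub 0)) (0 : Y)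
    have e : (‖m 0‖₊ : ℝ≥0∞) ^ p = (‖m 0 - (0:Y)‖₊ : ℝ≥0∞) ^ p := by rw [sub_zero]
    rw [e]
    refine h.trans ?_
    rw [hone, hL]
    simp
  -- telescoping
  have htel : ∀ N : ℕ, (‖m N‖₊ : ℝ≥0∞)
      ≤ (‖m 0‖₊ : ℝ≥0∞) + ∑ k ∈ Finset.range N, (‖m (k+1) - m k‖₊ : ℝ≥0∞) := by
    intro N
    induction N with
    | zero => simp
    | succ N ih =>
      rw [Finset.sum_range_succ, ← add_assoc]
      calc (‖m (N+1)‖₊ : ℝ≥0∞) = (‖m N + (m (N+1) - m N)‖₊ : ℝ≥0∞) := by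
            rw [show m N + (m (N+1) - m N) = m (N+1) by abel]
        _ ≤ (‖m N‖₊ : ℝ≥0∞) + (‖m (N+1) - m N‖₊ : ℝ≥0∞) := by
            exact_mod_cast nnnorm_add_le _ _
        _ ≤ _ := by gcongr
  -- increment bounds
  have hinc : ∀ k : ℕ, (‖m (k+1) - m k‖₊ : ℝ≥0∞)
      ≤ ENNReal.ofReal ((2:ℝ)^(1/p) * r^k) * G ^ (1/p) := by
    intro k
    have h := inc hpq hα0 hx k
    have h2 := mnorm_le hp h
    refine h2.trans ?_
    rw [ENNReal.mul_rpow_of_nonneg _ _ (by positivity : (0:ℝ) ≤ 1/p)]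
    gcongr
    calc ENNReal.ofReal (2 * (2:ℝ)^((k:ℝ)*(1-α*p))) ^ ((1:ℝ)/p)
        = ENNReal.ofReal ((2 * (2:ℝ)^((k:ℝ)*(1-α*p))) ^ ((1:ℝ)/p)) := by
          rw [ENNReal.ofReal_rpow_of_nonneg (by positivity) (by positivity)]
      _ ≤ ENNReal.ofReal ((2:ℝ)^((1:ℝ)/p) * r^k) := by
          apply ENNReal.ofReal_le_ofReal
          apply le_of_eq
          rw [Real.mul_rpow (by norm_num) (Real.rpow_nonneg (by norm_num) _),
            ← Real.rpow_natCast r k, hr, ← Real.rpow_mul (by norm_num : (0:ℝ) ≤ 2),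
            ← Real.rpow_mul (by norm_num : (0:ℝ) ≤ 2)]
          congr 1
          ring
  -- geometric sum
  have hsum : ∑ k ∈ Finset.range n, (‖m (k+1) - m k‖₊ : ℝ≥0∞)
      ≤ ENNReal.ofReal (A * r^n) * G ^ (1/p) := by
    calc ∑ k ∈ Finset.range n, (‖m (k+1) - m k‖₊ : ℝ≥0∞)
        ≤ ∑ k ∈ Finset.range n, ENNReal.ofReal ((2:ℝ)^(1/p) * r^k) * G ^ (1/p) :=
          Finset.sum_le_sum (fun k _ => hinc k)
      _ = ENNReal.ofReal (∑ k ∈ Finset.range n, (2:ℝ)^(1/p) * r^k) * G ^ (1/p) := by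
          rw [← Finset.sum_mul, ← ENNReal.ofReal_sum_of_nonneg]
          intro k _
          positivity
      _ ≤ ENNReal.ofReal (A * r^n) * G ^ (1/p) := by
          gcongr
          rw [← Finset.mul_sum, geom_sum_eq hr1.ne' n, hA, div_mul_eq_mul_div, mul_div_assoc]
          gcongr <;> linarith
  -- bound on m n
  have hmn : (‖m n‖₊ : ℝ≥0∞) ≤ L ^ (1/p) + ENNReal.ofReal (A * r^n) * G ^ (1/p) :=
    (htel n).trans (add_le_add (mnorm_le hp hm0) hsum)
  -- p-th power
  have hmnp : (‖m n‖₊ : ℝ≥0∞) ^ p ≤ (2:ℝ≥0∞)^p * (L + ENNReal.ofReal ((A * r^n)^p) * G) := by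
    calc (‖m n‖₊ : ℝ≥0∞) ^ p ≤ (L ^ (1/p) + ENNReal.ofReal (A * r^n) * G ^ (1/p)) ^ p :=
          ENNReal.rpow_le_rpow hmn hp.le
      _ ≤ (2:ℝ≥0∞)^p * ((L ^ (1/p)) ^ p + (ENNReal.ofReal (A * r^n) * G ^ (1/p)) ^ p) :=
          l1 hp.le
      _ = (2:ℝ≥0∞)^p * (L + ENNReal.ofReal ((A * r^n)^p) * G) := by
          congr 1
          rw [← ENNReal.rpow_mul, one_div_mul_cancel hp.ne', ENNReal.rpow_one,
            ENNReal.mul_rpow_of_nonneg _ _ hp.le, ← ENNReal.rpow_mul,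
            one_div_mul_cancel hp.ne', ENNReal.rpow_one,
            ← ENNReal.ofReal_rpow_of_nonneg (by positivity) hp.le]
  -- final assembly
  set e : ℝ≥0∞ := ENNReal.ofReal (δ ^ (α*p)) with he
  have hFdef : gagliardoP p α x = ∫⁻ t in Ioc (0:ℝ) 1,
      ∫⁻ s in Ioc (0:ℝ) 1, ENNReal.ofReal (‖x t - x s‖ ^ p / |t - s| ^ (1+α*p)) := rfl
  have h7b : ∫⁻ t in Ioc (0:ℝ) δ, (‖x t - m n‖₊ : ℝ≥0∞) ^ p ≤ e * G := by
    calc ∫⁻ t in Ioc (0:ℝ) δ, (‖x t - m n‖₊ : ℝ≥0∞) ^ p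
        ≤ ∫⁻ t in Ioc (0:ℝ) δ, ENNReal.ofReal (δ ^ (α*p)) *
            ∫⁻ s in Ioc (0:ℝ) 1, ENNReal.ofReal (‖x t - x s‖ ^ p / |t - s| ^ (1+α*p)) := by
          apply lintegral_mono_ae
          filter_upwards [ae_restrict_mem measurableSet_Ioc] with t ht
          have hneg : x t - m n = -(m n - x t) := by abel
          rw [hneg, nnnorm_neg]
          exact osc_k hpq hα0 hx n ht
      _ = ENNReal.ofReal (δ ^ (α*p)) * ∫⁻ t in Ioc (0:ℝ) δ,
            ∫⁻ s in Ioc (0:ℝ) 1, ENNReal.ofReal (‖x t - x s‖ ^ p / |t - s| ^ (1+α*p)) :=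
          lintegral_const_mul' _ _ ENNReal.ofReal_ne_top
      _ ≤ e * G := by
          rw [he, hG, hFdef]
          gcongr
  have h2top : ((2:ℝ≥0∞)^p) ≠ ⊤ := ENNReal.rpow_ne_top_of_nonneg hp.le (by norm_num)
  have h7a : ∀ t : ℝ, (‖x t‖₊ : ℝ≥0∞) ^ p
      ≤ (2:ℝ≥0∞)^p * ((‖m n‖₊ : ℝ≥0∞) ^ p + (‖x t - m n‖₊ : ℝ≥0∞) ^ p) := by
    intro t
    have h := nnnorm_add_le (m n) (x t - m n)
    rw [show m n + (x t - m n) = x t by abel] at h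
    have h' : (‖x t‖₊ : ℝ≥0∞) ≤ (‖m n‖₊ : ℝ≥0∞) + (‖x t - m n‖₊ : ℝ≥0∞) := by
      exact_mod_cast h
    exact (ENNReal.rpow_le_rpow h' hp.le).trans (l1 hp.le)
  have hδle : ENNReal.ofReal δ ≤ e := by
    apply ENNReal.ofReal_le_ofReal
    calc δ = δ ^ (1:ℝ) := (Real.rpow_one δ).symm
      _ ≤ δ ^ (α*p) := Real.rpow_le_rpow_of_exponent_ge hδ hδ1 hαp.le
  have hreal1 : ((1:ℝ)/2^n) = (2:ℝ)^(-(n:ℝ)) := by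
    rw [one_div, ← Real.rpow_natCast 2 n, ← Real.rpow_neg (by norm_num)]
  have hkey : δ * (A * r^n)^p = A^p * δ^(α*p) := by
    rw [Real.mul_rpow hApos.le (by positivity), ← Real.rpow_natCast r n, hr,
      ← Real.rpow_mul (by norm_num : (0:ℝ) ≤ 2), ← Real.rpow_mul (by norm_num : (0:ℝ) ≤ 2),
      show (1 - α*p)/p * (n:ℝ) * p = (n:ℝ) * (1 - α*p) by field_simp,
      hδdef, hreal1, ← Real.rpow_mul (by norm_num : (0:ℝ) ≤ 2)]
    rw [show (2:ℝ)^(-(n:ℝ)) * (A^p * 2^((n:ℝ)*(1-α*p)))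
        = A^p * ((2:ℝ)^((n:ℝ)*(1-α*p)) * 2^(-(n:ℝ))) by ring,
      ← Real.rpow_add (by norm_num : (0:ℝ) < 2)]
    congr 1
    ring
  calc ∫⁻ t in Ioc (0:ℝ) δ, (‖x t‖₊ : ℝ≥0∞) ^ p
      ≤ ∫⁻ t in Ioc (0:ℝ) δ,
          (2:ℝ≥0∞)^p * ((‖m n‖₊ : ℝ≥0∞) ^ p + (‖x t - m n‖₊ : ℝ≥0∞) ^ p) :=
        lintegral_mono (fun t => h7a t)
    _ = (2:ℝ≥0∞)^p * (ENNReal.ofReal δ * (‖m n‖₊ : ℝ≥0∞) ^ p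
          + ∫⁻ t in Ioc (0:ℝ) δ, (‖x t - m n‖₊ : ℝ≥0∞) ^ p) := by
        rw [lintegral_const_mul' _ _ h2top, lintegral_add_left' aemeasurable_const,
          lintegral_const, Measure.restrict_apply_univ, Real.volume_Ioc, sub_zero, mul_comm
            ((‖m n‖₊ : ℝ≥0∞) ^ p) _]
    _ ≤ (2:ℝ≥0∞)^p * (ENNReal.ofReal δ *
          ((2:ℝ≥0∞)^p * (L + ENNReal.ofReal ((A * r^n)^p) * G)) + e * G) := by
        gcongr
    _ ≤ ENNReal.ofReal
          (2 * ((2:ℝ)^p + 4^p * (1 + A^p)) * δ^(α*p)) * (L + G) := by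
        have h2p : ((2:ℝ≥0∞)^p) = ENNReal.ofReal ((2:ℝ)^p) := by
          rw [← ENNReal.ofReal_rpow_of_pos (by norm_num : (0:ℝ) < 2)]
          norm_num
        have expand : (2:ℝ≥0∞)^p * (ENNReal.ofReal δ *
              ((2:ℝ≥0∞)^p * (L + ENNReal.ofReal ((A * r^n)^p) * G)) + e * G)
            = (ENNReal.ofReal ((2:ℝ)^p) * ENNReal.ofReal δ * ENNReal.ofReal ((2:ℝ)^p)) * L
              + (ENNReal.ofReal ((2:ℝ)^p) * ENNReal.ofReal δ * ENNReal.ofReal ((2:ℝ)^p)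
                  * ENNReal.ofReal ((A * r^n)^p)) * G
              + (ENNReal.ofReal ((2:ℝ)^p) * e) * G := by
          rw [h2p]; ring
        rw [expand]
        have hc2 : (0:ℝ) < (2:ℝ)^p := Real.rpow_pos_of_pos (by norm_num) _
        have hc4 : (0:ℝ) < (4:ℝ)^p := Real.rpow_pos_of_pos (by norm_num) _
        have h44 : (2:ℝ)^p * (2:ℝ)^p = (4:ℝ)^p := by
          rw [show (4:ℝ) = 2*2 by norm_num, Real.mul_rpow] <;> norm_num
        have hδαnn : (0:ℝ) ≤ δ^(α*p) := Real.rpow_nonneg hδ.le _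
        have hδle' : δ ≤ δ^(α*p) := by
          calc δ = δ ^ (1:ℝ) := (Real.rpow_one δ).symm
            _ ≤ δ ^ (α*p) := Real.rpow_le_rpow_of_exponent_ge hδ hδ1 hαp.le
        have hAp : (0:ℝ) ≤ A^p := Real.rpow_nonneg hApos.le _
        set K : ℝ := (2:ℝ)^p + 4^p * (1 + A^p) with hK
        have hcoef1 : ENNReal.ofReal ((2:ℝ)^p) * ENNReal.ofReal δ * ENNReal.ofReal ((2:ℝ)^p)
            ≤ ENNReal.ofReal (K * δ^(α*p)) := by
          rw [← ENNReal.ofReal_mul hc2.le, ← ENNReal.ofReal_mul (by positivity)]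
          apply ENNReal.ofReal_le_ofReal
          calc (2:ℝ)^p * δ * 2^p = 4^p * δ := by rw [← h44]; ring
            _ ≤ 4^p * δ^(α*p) := mul_le_mul_of_nonneg_left hδle' hc4.le
            _ ≤ K * δ^(α*p) := by
                apply mul_le_mul_of_nonneg_right _ hδαnn
                rw [hK]
                nlinarith [mul_nonneg hc4.le hAp]
        have hcoef2 : ENNReal.ofReal ((2:ℝ)^p) * ENNReal.ofReal δ * ENNReal.ofReal ((2:ℝ)^p)
              * ENNReal.ofReal ((A * r^n)^p)
            ≤ ENNReal.ofReal (K * δ^(α*p)) := by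
          rw [← ENNReal.ofReal_mul hc2.le, ← ENNReal.ofReal_mul (by positivity),
            ← ENNReal.ofReal_mul (by positivity)]
          apply ENNReal.ofReal_le_ofReal
          calc (2:ℝ)^p * δ * 2^p * (A*r^n)^p = 4^p * (δ * (A*r^n)^p) := by rw [← h44]; ring
            _ = 4^p * (A^p * δ^(α*p)) := by rw [hkey]
            _ ≤ K * δ^(α*p) := by
                rw [hK]
                nlinarith [mul_nonneg hc2.le hδαnn, mul_nonneg hc4.le hδαnn]
        have hcoef3 : ENNReal.ofReal ((2:ℝ)^p) * e ≤ ENNReal.ofReal (K * δ^(α*p)) := by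
          rw [he, ← ENNReal.ofReal_mul hc2.le]
          apply ENNReal.ofReal_le_ofReal
          rw [hK]
          nlinarith [mul_nonneg hc4.le hδαnn, mul_nonneg (mul_nonneg hc4.le hAp) hδαnn]
        calc (ENNReal.ofReal ((2:ℝ)^p) * ENNReal.ofReal δ * ENNReal.ofReal ((2:ℝ)^p)) * L
              + (ENNReal.ofReal ((2:ℝ)^p) * ENNReal.ofReal δ * ENNReal.ofReal ((2:ℝ)^p)
                  * ENNReal.ofReal ((A * r^n)^p)) * G
              + (ENNReal.ofReal ((2:ℝ)^p) * e) * G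
            ≤ ENNReal.ofReal (K * δ^(α*p)) * L + ENNReal.ofReal (K * δ^(α*p)) * G
              + ENNReal.ofReal (K * δ^(α*p)) * G := by
              gcongr
          _ ≤ _ := by
              rw [show 2 * ((2:ℝ)^p + 4^p * (1 + A^p)) * δ^(α*p) = 2 * (K * δ^(α*p)) by
                rw [hK]; ring]
              rw [ENNReal.ofReal_mul (by norm_num : (0:ℝ) ≤ 2)]
              rw [show (ENNReal.ofReal (2:ℝ)) = (2:ℝ≥0∞) by norm_num]
              rw [show (2:ℝ≥0∞) * ENNReal.ofReal (K * δ^(α*p)) * (L + G)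
                  = ENNReal.ofReal (K * δ^(α*p)) * L + ENNReal.ofReal (K * δ^(α*p)) * G
                    + (ENNReal.ofReal (K * δ^(α*p)) * L + ENNReal.ofReal (K * δ^(α*p)) * G) by
                ring]
              exact add_le_add le_rfl le_add_self

end Tail

section Blocks
variable {Y : Type*} [NormedAddCommGroup Y] [NormedSpace ℝ Y] [CompleteSpace Y]
  {x : ℝ → Y} {p q α : ℝ}

lemma blocks (hpq : p.HolderConjugate q) (hα0 : 0 < α)
    (hx : MemLp x (ENNReal.ofReal p) (volume.restrict (Ioc (0:ℝ) 1))) (n : ℕ) :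
    ∑ j ∈ Finset.Ico 1 (2^n : ℕ), ∫⁻ t in Ioc ((j:ℝ)/2^n) (((j:ℝ)+1)/2^n),
        (‖shiftedHaar n x t - x t‖₊ : ℝ≥0∞) ^ p
      ≤ ENNReal.ofReal ((2:ℝ)^(1+α*p) * ((1:ℝ)/2^n)^(α*p)) * gagliardoP p α x := by
  have hp := hpq.pos
  have hβ : 0 < 1 + α * p := by nlinarith
  have hT : (0:ℝ) < 2^n := by positivity
  set κ : ℝ≥0∞ := ENNReal.ofReal ((2:ℝ)^(1+α*p) * ((1:ℝ)/2^n)^(α*p)) with hκ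
  have hFdef : gagliardoP p α x = ∫⁻ t in Ioc (0:ℝ) 1,
      ∫⁻ s in Ioc (0:ℝ) 1, ENNReal.ofReal (‖x t - x s‖ ^ p / |t - s| ^ (1+α*p)) := rfl
  have hblock : ∀ j ∈ Finset.Ico 1 (2^n : ℕ),
      ∫⁻ t in Ioc ((j:ℝ)/2^n) (((j:ℝ)+1)/2^n), (‖shiftedHaar n x t - x t‖₊ : ℝ≥0∞) ^ p
        ≤ κ * ∫⁻ t in Ioc ((j:ℝ)/2^n) (((j:ℝ)+1)/2^n),
            ∫⁻ s in Ioc (0:ℝ) 1, ENNReal.ofReal (‖x t - x s‖ ^ p / |t - s| ^ (1+α*p)) := by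
    intro j hj
    rw [Finset.mem_Ico] at hj
    have hj1 : (1:ℝ) ≤ (j:ℝ) := by exact_mod_cast hj.1
    have hj2 : (j:ℝ) + 1 ≤ 2^n := by
      have h' : (j:ℕ) + 1 ≤ 2^n := hj.2
      have : ((j:ℕ) : ℝ) + 1 ≤ ((2^n : ℕ) : ℝ) := by exact_mod_cast h'
      simpa using this
    have hab : ((j:ℝ)-1)/2^n < (j:ℝ)/2^n := by
      rw [div_lt_div_iff₀ hT hT]
      nlinarith
    have hsub : Ioc (((j:ℝ)-1)/2^n) ((j:ℝ)/2^n) ⊆ Ioc (0:ℝ) 1 := by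
      apply Ioc_subset_Ioc
      · exact div_nonneg (by linarith) hT.le
      · rw [div_le_one hT]; linarith
    have hba : (j:ℝ)/2^n - ((j:ℝ)-1)/2^n = (1:ℝ)/2^n := by
      field_simp
      ring
    calc ∫⁻ t in Ioc ((j:ℝ)/2^n) (((j:ℝ)+1)/2^n), (‖shiftedHaar n x t - x t‖₊ : ℝ≥0∞) ^ p
        ≤ ∫⁻ t in Ioc ((j:ℝ)/2^n) (((j:ℝ)+1)/2^n), κ *
            ∫⁻ s in Ioc (0:ℝ) 1, ENNReal.ofReal (‖x t - x s‖ ^ p / |t - s| ^ (1+α*p)) := by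
          apply lintegral_mono_ae
          filter_upwards [ae_restrict_mem measurableSet_Ioc] with t ht
          have heval : shiftedHaar n x t
              = ((j:ℝ)/2^n - ((j:ℝ)-1)/2^n)⁻¹ •
                ∫ r in Ioc (((j:ℝ)-1)/2^n) ((j:ℝ)/2^n), x r := by
            rw [haar_eq n x (Finset.mem_Ico.2 hj) ht, hba]
            norm_num
          rw [heval]
          have hc : ∀ s ∈ Ioc (((j:ℝ)-1)/2^n) ((j:ℝ)/2^n), |t - s| ≤ 2/2^n := by
            intro s hs
            rw [abs_le]
            have h1 := hs.1
            have h2 := hs.2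
            have h3 := ht.1
            have h4 := ht.2
            have e : ((j:ℝ)+1)/2^n - ((j:ℝ)-1)/2^n = 2/2^n := by
              rw [div_sub_div_same]
              norm_num
            have hpos : (0:ℝ) < 2/2^n := by positivity
            constructor <;> linarith
          have h := osc hpq hβ hx hab hsub hc (by positivity)
          refine h.trans ?_
          gcongr
          rw [hba, hκ, ← ENNReal.ofReal_inv_of_pos (by positivity : (0:ℝ) < (1:ℝ)/2^n),
            ← ENNReal.ofReal_mul (by positivity)]
          apply ENNReal.ofReal_le_ofReal
          apply le_of_eq
          rw [show (2:ℝ)/2^n = 2 * ((1:ℝ)/2^n) by ring,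
            Real.mul_rpow (by norm_num) (by positivity),
            Real.rpow_add (by positivity : (0:ℝ) < (1:ℝ)/2^n) 1 (α*p), Real.rpow_one]
          field_simp
          try ring
      _ = κ * ∫⁻ t in Ioc ((j:ℝ)/2^n) (((j:ℝ)+1)/2^n),
            ∫⁻ s in Ioc (0:ℝ) 1, ENNReal.ofReal (‖x t - x s‖ ^ p / |t - s| ^ (1+α*p)) :=
          lintegral_const_mul' _ _ (by rw [hκ]; exact ENNReal.ofReal_ne_top)
  calc ∑ j ∈ Finset.Ico 1 (2^n : ℕ), ∫⁻ t in Ioc ((j:ℝ)/2^n) (((j:ℝ)+1)/2^n),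
        (‖shiftedHaar n x t - x t‖₊ : ℝ≥0∞) ^ p
      ≤ ∑ j ∈ Finset.Ico 1 (2^n : ℕ), κ * ∫⁻ t in Ioc ((j:ℝ)/2^n) (((j:ℝ)+1)/2^n),
          ∫⁻ s in Ioc (0:ℝ) 1, ENNReal.ofReal (‖x t - x s‖ ^ p / |t - s| ^ (1+α*p)) :=
        Finset.sum_le_sum hblock
    _ = κ * ∑ j ∈ Finset.Ico 1 (2^n : ℕ), ∫⁻ t in Ioc ((j:ℝ)/2^n) (((j:ℝ)+1)/2^n),
          ∫⁻ s in Ioc (0:ℝ) 1, ENNReal.ofReal (‖x t - x s‖ ^ p / |t - s| ^ (1+α*p)) :=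
        (Finset.mul_sum _ _ _).symm
    _ ≤ κ * gagliardoP p α x := by
        gcongr
        rw [hFdef]
        rw [← lintegral_biUnion_finset (s := Finset.Ico 1 (2^n : ℕ))
          (t := fun j : ℕ => Ioc ((j:ℝ)/2^n) (((j:ℝ)+1)/2^n))
          ((l6 n).subset ?_) (fun b _ => measurableSet_Ioc)]
        · apply lintegral_mono' (Measure.restrict_mono ?_ le_rfl) le_rfl
          apply Set.iUnion₂_subset
          intro j hj
          rw [Finset.mem_Ico] at hj
          apply Ioc_subset_Ioc
          · positivity
          · rw [div_le_one hT]
            have h' : (j:ℕ) + 1 ≤ 2^n := hj.2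
            have : ((j:ℕ) : ℝ) + 1 ≤ ((2^n : ℕ) : ℝ) := by exact_mod_cast h'
            simpa using this
        · refine Finset.coe_subset.mpr ?_
          intro a ha
          rw [Finset.mem_Ico] at ha
          rw [Finset.mem_range]
          exact ha.2

end Blocks


/-- Convergence rate of the shifted Haar projection in fractional Sobolev spaces:
there is a constant `C > 0`, depending only on `p` and `α`, such that
`‖𝔥ⁿ_s(x) − x‖_{L^p} ≤ C · 2^{−nα} · ‖x‖_{W^α_p}`. -/
theorem shiftedHaar_convergence_rate
    {Y : Type*} [NormedAddCommGroup Y] [NormedSpace ℝ Y] [CompleteSpace Y]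
    (p α : ℝ) (hp : 1 < p) (hα : α ∈ Set.Ioc (0 : ℝ) 1) (hαp : α * p < 1) :
    ∃ C : ℝ, 0 < C ∧ ∀ (n : ℕ) (x : ℝ → Y),
      MemLp x (ENNReal.ofReal p) (volume.restrict (Set.Ioc (0 : ℝ) 1)) →
      sobolevNorm p α x ≠ ⊤ →
      eLpNorm (fun t => shiftedHaar n x t - x t) (ENNReal.ofReal p)
          (volume.restrict (Set.Ioc (0 : ℝ) 1))
        ≤ ENNReal.ofReal (C * (2 : ℝ) ^ (-(n : ℝ) * α)) * sobolevNorm p α x := by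
  have hpq : p.HolderConjugate (p/(p-1)) := Real.HolderConjugate.conjExponent hp
  have hp0 : 0 < p := hpq.pos
  have hα0 : 0 < α := hα.1
  have hβ : 0 < 1 + α * p := by nlinarith
  have hθ : 0 < (1 - α*p)/p := div_pos (by linarith) hp0
  have hr1 : 1 < (2:ℝ)^((1-α*p)/p) :=
    Real.one_lt_rpow_iff_of_pos (by norm_num) |>.2 (Or.inl ⟨by norm_num, hθ⟩)
  set A : ℝ := (2:ℝ)^(1/p)/((2:ℝ)^((1-α*p)/p) - 1) with hA
  have hApos : 0 < A := div_pos (Real.rpow_pos_of_pos (by norm_num) _) (by linarith)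
  set base : ℝ := (2:ℝ)^(1+α*p) + 2 * ((2:ℝ)^p + 4^p * (1 + A^p)) with hbase
  have hbasepos : 0 < base := by
    have h1 : (0:ℝ) < (2:ℝ)^(1+α*p) := Real.rpow_pos_of_pos (by norm_num) _
    have h2 : (0:ℝ) < (2:ℝ)^p := Real.rpow_pos_of_pos (by norm_num) _
    have h3 : (0:ℝ) < (4:ℝ)^p := Real.rpow_pos_of_pos (by norm_num) _
    have h4 : (0:ℝ) ≤ A^p := Real.rpow_nonneg hApos.le _
    nlinarith
  refine ⟨base ^ (1/p), Real.rpow_pos_of_pos hbasepos _, ?_⟩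
  intro n x hx _hsob
  have hT : (0:ℝ) < 2^n := by positivity
  have hδ : (0:ℝ) < (1:ℝ)/2^n := by positivity
  set G := gagliardoP p α x with hG
  set L := ∫⁻ r in Ioc (0:ℝ) 1, (‖x r‖₊ : ℝ≥0∞) ^ p with hL
  set D : ℝ → Y := fun t => shiftedHaar n x t - x t with hD
  -- Step B: decompose into dyadic blocks
  have hsplit : ∫⁻ t in Ioc (0:ℝ) 1, (‖D t‖₊ : ℝ≥0∞) ^ p
      ≤ (∫⁻ t in Ioc (((0:ℕ):ℝ)/2^n) ((((0:ℕ):ℝ)+1)/2^n), (‖D t‖₊ : ℝ≥0∞) ^ p)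
        + ∑ j ∈ Finset.Ico 1 (2^n : ℕ),
            ∫⁻ t in Ioc ((j:ℝ)/2^n) (((j:ℝ)+1)/2^n), (‖D t‖₊ : ℝ≥0∞) ^ p := by
    calc ∫⁻ t in Ioc (0:ℝ) 1, (‖D t‖₊ : ℝ≥0∞) ^ p
        ≤ ∫⁻ t in ⋃ j ∈ Finset.range (2^n), Ioc ((j:ℝ)/2^n) (((j:ℝ)+1)/2^n),
            (‖D t‖₊ : ℝ≥0∞) ^ p :=
          lintegral_mono' (Measure.restrict_mono (l5 n) le_rfl) le_rfl
      _ = ∑ j ∈ Finset.range (2^n),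
            ∫⁻ t in Ioc ((j:ℝ)/2^n) (((j:ℝ)+1)/2^n), (‖D t‖₊ : ℝ≥0∞) ^ p :=
          lintegral_biUnion_finset (l6 n) (fun b _ => measurableSet_Ioc) _
      _ = _ := by
          rw [Finset.range_eq_Ico, Finset.sum_eq_sum_Ico_succ_bot (by positivity : 0 < 2^n)]
  -- Step C: the first block, via `tail`
  have hset0 : Ioc (((0:ℕ):ℝ)/2^n) ((((0:ℕ):ℝ)+1)/2^n) = Ioc (0:ℝ) ((1:ℝ)/2^n) := by
    norm_num
  have hterm0 : ∫⁻ t in Ioc (((0:ℕ):ℝ)/2^n) ((((0:ℕ):ℝ)+1)/2^n), (‖D t‖₊ : ℝ≥0∞) ^ p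
      ≤ ENNReal.ofReal
          (2 * ((2:ℝ)^p + 4^p * (1 + A^p)) * ((1:ℝ)/2^n)^(α*p)) * (L + G) := by
    rw [hset0]
    have heq : ∫⁻ t in Ioc (0:ℝ) ((1:ℝ)/2^n), (‖D t‖₊ : ℝ≥0∞) ^ p
        ≤ ∫⁻ t in Ioc (0:ℝ) ((1:ℝ)/2^n), (‖x t‖₊ : ℝ≥0∞) ^ p := by
      apply lintegral_mono_ae
      filter_upwards [ae_restrict_mem measurableSet_Ioc] with t ht
      apply le_of_eq
      rw [hD]
      simp only
      rw [haar_zero n x ht.2, zero_sub, nnnorm_neg]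
    exact heq.trans (tail hpq hα0 hαp hx n)
  -- Step D: the remaining blocks
  have hterm1 := blocks hpq hα0 hx n
  -- combine
  have htot : ∫⁻ t in Ioc (0:ℝ) 1, (‖D t‖₊ : ℝ≥0∞) ^ p
      ≤ ENNReal.ofReal (base * ((1:ℝ)/2^n)^(α*p)) * (L + G) := by
    refine hsplit.trans ?_
    have h2 : ∑ j ∈ Finset.Ico 1 (2^n : ℕ),
        ∫⁻ t in Ioc ((j:ℝ)/2^n) (((j:ℝ)+1)/2^n), (‖D t‖₊ : ℝ≥0∞) ^ p
        ≤ ENNReal.ofReal ((2:ℝ)^(1+α*p) * ((1:ℝ)/2^n)^(α*p)) * (L + G) := by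
      refine hterm1.trans ?_
      gcongr
      exact le_add_self
    refine (add_le_add hterm0 h2).trans ?_
    rw [← add_mul, ← ENNReal.ofReal_add (by positivity) (by positivity), ← add_mul]
    apply mul_le_mul_left (ENNReal.ofReal_le_ofReal ?_)
    apply mul_le_mul_of_nonneg_right _ (by positivity)
    rw [hbase]
    linarith
  -- Step E: take p-th roots
  have hne0 : (ENNReal.ofReal p) ≠ 0 := by
    simp [ENNReal.ofReal_eq_zero, not_le, hp0]
  have hnetop : (ENNReal.ofReal p) ≠ ⊤ := ENNReal.ofReal_ne_top
  have htoReal : (ENNReal.ofReal p).toReal = p := ENNReal.toReal_ofReal hp0.le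
  have hsobeq : sobolevNorm p α x = (L + G) ^ (1/p) := by
    rw [sobolevNorm, eLpNorm_eq_lintegral_rpow_enorm_toReal hne0 hnetop, htoReal,
      ← ENNReal.rpow_mul, one_div_mul_cancel hp0.ne', ENNReal.rpow_one, hL, hG]
    rfl
  rw [eLpNorm_eq_lintegral_rpow_enorm_toReal hne0 hnetop, htoReal, hsobeq]
  calc (∫⁻ t in Ioc (0:ℝ) 1, (‖D t‖₊ : ℝ≥0∞) ^ p) ^ (1/p)
      ≤ (ENNReal.ofReal (base * ((1:ℝ)/2^n)^(α*p)) * (L + G)) ^ (1/p) :=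
        ENNReal.rpow_le_rpow htot (by positivity)
    _ = ENNReal.ofReal (base * ((1:ℝ)/2^n)^(α*p)) ^ (1/p) * (L + G) ^ (1/p) :=
        ENNReal.mul_rpow_of_nonneg _ _ (by positivity)
    _ = ENNReal.ofReal (base ^ (1/p) * (2:ℝ)^(-(n:ℝ)*α)) * (L + G) ^ (1/p) := by
        congr 1
        rw [ENNReal.ofReal_rpow_of_nonneg (by positivity) (by positivity)]
        congr 1
        rw [Real.mul_rpow hbasepos.le (by positivity)]
        congr 1
        rw [one_div, ← Real.rpow_natCast 2 n, ← Real.rpow_neg (by norm_num : (0:ℝ) ≤ 2),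
          ← Real.rpow_mul (by norm_num : (0:ℝ) ≤ 2),
          ← Real.rpow_mul (by norm_num : (0:ℝ) ≤ 2)]
        congr 1
        field_simp
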